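/- For all natural numbers n ≥ 1, the sum Σ_{s=0}^n (n choose s)^2/(1+2s) is at least (2n choose n)/(n+1) + (2n choose n)*n^2/((n+1)^3*(2n-1)). -/

import Mathlib

open Finset

lemma sum_sq_choose (n : ℕ) : ∑ s ∈ range (n+1), n.choose s ^ 2 = (2*n).choose n := by
  have h := Nat.add_choose_eq n n n
  rw [Nat.sum_antidiagonal_eq_sum_range_succ (fun x y => n.choose x * n.choose y) n] at h
  rw [two_mul, h]
  apply Finset.sum_congr rfl
  intro s hs
  rw [Nat.choose_symm (Nat.lt_succ_iff.mp (mem_range.mp hs)), pow_two]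

lemma sum_odd_refl (n k : ℕ) (hk : Odd k) :
    ∑ s ∈ range (n+1), ((n:ℚ) - 2*s)^k * (n.choose s : ℚ)^2 = 0 := by
  have h := Finset.sum_range_reflect (fun s => ((n:ℚ) - 2*s)^k * (n.choose s : ℚ)^2) (n+1)
  simp only [Nat.add_sub_cancel] at h
  have h2 : ∀ s ∈ range (n+1),
      ((n:ℚ) - 2*((n - s : ℕ) : ℚ))^k * ((n.choose (n-s)) : ℚ)^2
        = -(((n:ℚ) - 2*s)^k * (n.choose s : ℚ)^2) := by
    intro s hs
    have hsn : s ≤ n := Nat.lt_succ_iff.mp (mem_range.mp hs)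
    rw [Nat.choose_symm hsn, Nat.cast_sub hsn,
      show (n:ℚ) - 2*((n:ℚ) - s) = -((n:ℚ) - 2*s) by ring, Odd.neg_pow hk]
    ring
  rw [Finset.sum_congr rfl h2, Finset.sum_neg_distrib] at h
  linarith

lemma sum_sq_mul (m : ℕ) :
    ∑ s ∈ range (m+2), (s:ℚ)^2 * ((m+1).choose s : ℚ)^2
      = ((m:ℚ)+1)^2 * ((2*m).choose m : ℚ) := by
  rw [Finset.sum_range_succ']
  have h2 : ∀ i ∈ range (m+1),
      ((i+1 : ℕ):ℚ)^2 * ((m+1).choose (i+1) : ℚ)^2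
        = ((m:ℚ)+1)^2 * ((m.choose i : ℚ))^2 := by
    intro i _
    have h := Nat.add_one_mul_choose_eq m i
    have h' : ((m:ℚ)+1) * (m.choose i : ℚ) = ((m+1).choose (i+1) : ℚ) * ((i:ℚ)+1) := by
      exact_mod_cast h
    push_cast
    calc ((i:ℚ)+1)^2 * ((m+1).choose (i+1) : ℚ)^2
        = (((m+1).choose (i+1) : ℚ) * ((i:ℚ)+1))^2 := by ring
      _ = (((m:ℚ)+1) * (m.choose i : ℚ))^2 := by rw [← h']
      _ = _ := by ring
  rw [Finset.sum_congr rfl h2, ← Finset.mul_sum]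
  have hs : ∑ i ∈ range (m+1), ((m.choose i : ℚ))^2 = ((2*m).choose m : ℚ) := by
    exact_mod_cast congrArg (Nat.cast : ℕ → ℚ) (sum_sq_choose m)
  rw [hs]
  push_cast
  ring

lemma choose_rel (m : ℕ) :
    2*(2*(m:ℚ)+1) * ((2*m).choose m : ℚ) = ((m:ℚ)+1) * ((2*(m+1)).choose (m+1) : ℚ) := by
  have f1 := Nat.add_one_mul_choose_eq (2*m+1) m
  have f2 := Nat.add_one_mul_choose_eq (2*m) m
  have f3 : (2*m+1).choose m = (2*m+1).choose (m+1) := by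
    rw [← Nat.choose_symm (by omega : m+1 ≤ 2*m+1)]
    congr 1
    omega
  rw [f3] at f1
  -- f1 : (2m+2) * (2m+1).choose (m+1) = (2m+2).choose (m+1) * (m+1)
  -- f2 : (2m+1) * (2m).choose m = (2m+1).choose (m+1) * (m+1)
  have q1 : (2*(m:ℚ)+2) * ((2*m+1).choose (m+1) : ℚ)
      = ((2*m+2).choose (m+1) : ℚ) * ((m:ℚ)+1) := by exact_mod_cast f1
  have q2 : (2*(m:ℚ)+1) * ((2*m).choose m : ℚ)
      = ((2*m+1).choose (m+1) : ℚ) * ((m:ℚ)+1) := by exact_mod_cast f2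
  have hm1 : ((m:ℚ)+1) ≠ 0 := by positivity
  have h22 : (2*(m+1)) = 2*m+2 := by ring
  rw [h22]
  apply mul_left_cancel₀ hm1
  push_cast
  linear_combination 2*((m:ℚ)+1)*q2 + ((m:ℚ)+1)*q1

theorem A_lower_bound (n : ℕ) (hn : 1 ≤ n) :
    ((2 * n).choose n : ℚ) / (n + 1)
        + ((2 * n).choose n : ℚ) * n ^ 2 / ((n + 1) ^ 3 * (2 * n - 1))
      ≤ ∑ s ∈ Finset.range (n + 1), ((n.choose s : ℚ)) ^ 2 / (1 + 2 * s) := by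
  obtain ⟨m, rfl⟩ : ∃ m, n = m + 1 := ⟨n - 1, by omega⟩
  have hm0 : (0:ℚ) ≤ (m:ℚ) := Nat.cast_nonneg m
  have hBnn : (0:ℚ) ≤ (((2*(m+1)).choose (m+1)) : ℚ) := by positivity
  -- M0
  have M0 : ∑ s ∈ range (m+2), ((m+1).choose s : ℚ)^2 = (((2*(m+1)).choose (m+1)) : ℚ) := by
    exact_mod_cast congrArg (Nat.cast : ℕ → ℚ) (sum_sq_choose (m+1))
  -- M1, M3
  have M1 : ∑ s ∈ range (m+2), (((m:ℚ)+1) - 2*s) * ((m+1).choose s : ℚ)^2 = 0 := by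
    have h := sum_odd_refl (m+1) 1 odd_one
    push_cast at h
    simp only [pow_one] at h
    exact h
  have M3 : ∑ s ∈ range (m+2), (((m:ℚ)+1) - 2*s)^3 * ((m+1).choose s : ℚ)^2 = 0 := by
    have h := sum_odd_refl (m+1) 3 (by decide)
    push_cast at h
    exact h
  -- S1
  have S1 : ∑ s ∈ range (m+2), (s:ℚ) * ((m+1).choose s : ℚ)^2
      = ((m:ℚ)+1) * (((2*(m+1)).choose (m+1)) : ℚ) / 2 := by
    have e : ∑ s ∈ range (m+2), (((m:ℚ)+1) - 2*s) * ((m+1).choose s : ℚ)^2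
        = ((m:ℚ)+1) * (∑ s ∈ range (m+2), ((m+1).choose s : ℚ)^2)
          - 2 * ∑ s ∈ range (m+2), (s:ℚ) * ((m+1).choose s : ℚ)^2 := by
      rw [Finset.mul_sum, Finset.mul_sum, ← Finset.sum_sub_distrib]
      exact Finset.sum_congr rfl (fun s _ => by ring)
    rw [M1, M0] at e
    linear_combination e / 2
  -- S2
  have S2 : ∑ s ∈ range (m+2), (s:ℚ)^2 * ((m+1).choose s : ℚ)^2
      = ((m:ℚ)+1)^2 * ((2*m).choose m : ℚ) := sum_sq_mul m
  -- M2
  have M2 : ∑ s ∈ range (m+2), (((m:ℚ)+1) - 2*s)^2 * ((m+1).choose s : ℚ)^2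
      = ((m:ℚ)+1)^2 * (((2*(m+1)).choose (m+1)) : ℚ) / (2*(m:ℚ)+1) := by
    have e : ∑ s ∈ range (m+2), (((m:ℚ)+1) - 2*s)^2 * ((m+1).choose s : ℚ)^2
        = ((m:ℚ)+1)^2 * (∑ s ∈ range (m+2), ((m+1).choose s : ℚ)^2)
          - (4*((m:ℚ)+1)) * (∑ s ∈ range (m+2), (s:ℚ) * ((m+1).choose s : ℚ)^2)
          + 4 * (∑ s ∈ range (m+2), (s:ℚ)^2 * ((m+1).choose s : ℚ)^2) := by
      rw [Finset.mul_sum, Finset.mul_sum, Finset.mul_sum, ← Finset.sum_sub_distrib,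
        ← Finset.sum_add_distrib]
      exact Finset.sum_congr rfl (fun s _ => by ring)
    rw [M0, S1, S2] at e
    have hrel := choose_rel m
    have hpos : (2*(m:ℚ)+1) ≠ 0 := by positivity
    rw [e]
    field_simp
    linear_combination 4 * hrel
  -- key sum equality
  have key : ∑ s ∈ range (m+2),
      ((m+1).choose s : ℚ)^2 * (((((m:ℚ)+1)+1) + (((m:ℚ)+1) - 2*s))
        * ((((m:ℚ)+1)+1)^2 + (((m:ℚ)+1) - 2*s)^2))
      = (((m:ℚ)+1)+1)^3 * (((2*(m+1)).choose (m+1)) : ℚ)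
        + (((m:ℚ)+1)+1) * (((m:ℚ)+1)^2 * (((2*(m+1)).choose (m+1)) : ℚ) / (2*(m:ℚ)+1)) := by
    have e : ∑ s ∈ range (m+2),
        ((m+1).choose s : ℚ)^2 * (((((m:ℚ)+1)+1) + (((m:ℚ)+1) - 2*s))
          * ((((m:ℚ)+1)+1)^2 + (((m:ℚ)+1) - 2*s)^2))
        = (((m:ℚ)+1)+1)^3 * (∑ s ∈ range (m+2), ((m+1).choose s : ℚ)^2)
          + (((m:ℚ)+1)+1)^2 * (∑ s ∈ range (m+2), (((m:ℚ)+1) - 2*s) * ((m+1).choose s : ℚ)^2)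
          + (((m:ℚ)+1)+1) * (∑ s ∈ range (m+2), (((m:ℚ)+1) - 2*s)^2 * ((m+1).choose s : ℚ)^2)
          + (∑ s ∈ range (m+2), (((m:ℚ)+1) - 2*s)^3 * ((m+1).choose s : ℚ)^2) := by
      rw [Finset.mul_sum, Finset.mul_sum, Finset.mul_sum, ← Finset.sum_add_distrib,
        ← Finset.sum_add_distrib, ← Finset.sum_add_distrib]
      exact Finset.sum_congr rfl (fun s _ => by ring)
    rw [e, M0, M1, M2, M3]
    ring
  -- termwise inequality
  have tw : ∀ s ∈ range (m+2),
      ((m+1).choose s : ℚ)^2 * (((((m:ℚ)+1)+1) + (((m:ℚ)+1) - 2*s))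
        * ((((m:ℚ)+1)+1)^2 + (((m:ℚ)+1) - 2*s)^2)) / (((m:ℚ)+1)+1)^4
        ≤ ((m+1).choose s : ℚ)^2 / (1 + 2*(s:ℚ)) := by
    intro s hs
    have hsn : (s:ℚ) ≤ (m:ℚ)+1 := by
      have h1 : s ≤ m+1 := Nat.lt_succ_iff.mp (mem_range.mp hs)
      have h2 : ((s:ℚ)) ≤ ((m+1 : ℕ) : ℚ) := by exact_mod_cast h1
      push_cast at h2
      linarith
    have h1 : (0:ℚ) < 1 + 2*(s:ℚ) := by positivity
    have h2 : (0:ℚ) < (((m:ℚ)+1)+1)^4 := by positivity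
    rw [div_le_div_iff₀ h2 h1]
    have hc : (0:ℚ) ≤ ((m+1).choose s : ℚ)^2 := sq_nonneg _
    nlinarith [mul_nonneg hc (sq_nonneg (((m:ℚ)+1 - 2*(s:ℚ))^2)),
      mul_nonneg hc (sq_nonneg ((m:ℚ)+1 - 2*(s:ℚ)))]
  -- assemble
  have hsum := Finset.sum_le_sum tw
  rw [← Finset.sum_div, key] at hsum
  have castm : ((m+1 : ℕ) : ℚ) = (m:ℚ) + 1 := by push_cast; ring
  rw [castm]
  have goal_eq : (((2*(m+1)).choose (m+1)) : ℚ) / ((m:ℚ) + 1 + 1)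
      + (((2*(m+1)).choose (m+1)) : ℚ) * ((m:ℚ)+1) ^ 2 / (((m:ℚ) + 1 + 1) ^ 3 * (2 * ((m:ℚ)+1) - 1))
      = ((((m:ℚ)+1)+1)^3 * (((2*(m+1)).choose (m+1)) : ℚ)
        + (((m:ℚ)+1)+1) * (((m:ℚ)+1)^2 * (((2*(m+1)).choose (m+1)) : ℚ) / (2*(m:ℚ)+1)))
        / (((m:ℚ)+1)+1)^4 := by
    have h1 : ((m:ℚ) + 1 + 1) ≠ 0 := by positivity
    have h2 : (2*(m:ℚ)+1) ≠ 0 := by positivity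
    have h3 : (2 * ((m:ℚ)+1) - 1) = 2*(m:ℚ)+1 := by ring
    rw [h3]
    field_simp
  rw [goal_eq]
  exact hsum
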